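/- Let a, b ∈ ℝⁿ. Then the inequality ∑_{i=1}^n h(a_i) ≥ ∑_{i=1}^n h(b_i) holds for every nondecreasing convex function h : ℝ → ℝ if and only if a weakly majorizes b (a ⪰_w b). -/

import Mathlib

noncomputable section

/-- The sum of the `k` largest entries of `x`, i.e. the maximum of `∑ i ∈ S, x i`
over all subsets `S` of cardinality `k`. -/
def topKSum {n : ℕ} (x : Fin n → ℝ) (k : ℕ) : ℝ :=
  sSup ((fun S : Finset (Fin n) => ∑ i ∈ S, x i) '' {S | S.card = k})

/-- `a` weakly majorizes `b`: for every `k = 1, …, n` the sum of the `k` largest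
entries of `a` is at least that of `b`. -/
def WeakMajorizes {n : ℕ} (a b : Fin n → ℝ) : Prop :=
  ∀ k, 1 ≤ k → k ≤ n → topKSum b k ≤ topKSum a k

namespace WMaux

open Finset

variable {n : ℕ}

lemma topK_finite (x : Fin n → ℝ) (k : ℕ) :
    ((fun S : Finset (Fin n) => ∑ i ∈ S, x i) '' {S | S.card = k}).Finite :=
  (Set.toFinite _).image _

lemma topK_nonempty (x : Fin n → ℝ) {k : ℕ} (hk : k ≤ n) :
    ((fun S : Finset (Fin n) => ∑ i ∈ S, x i) '' {S | S.card = k}).Nonempty := by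
  obtain ⟨S, -, hS⟩ := Finset.exists_subset_card_eq (s := (univ : Finset (Fin n))) (n := k) (by simpa using hk)
  exact ⟨_, ⟨S, hS, rfl⟩⟩

lemma sum_le_topKSum (x : Fin n → ℝ) {k : ℕ} {S : Finset (Fin n)} (hS : S.card = k) :
    ∑ i ∈ S, x i ≤ topKSum x k :=
  le_csSup (topK_finite x k).bddAbove ⟨S, hS, rfl⟩

lemma exists_topKSum (x : Fin n → ℝ) {k : ℕ} (hk : k ≤ n) :
    ∃ S : Finset (Fin n), S.card = k ∧ topKSum x k = ∑ i ∈ S, x i := by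
  have := Set.Nonempty.csSup_mem (topK_nonempty x hk) (topK_finite x k)
  obtain ⟨S, hS, h⟩ := this
  exact ⟨S, hS, h.symm⟩

lemma topKSum_le (x : Fin n → ℝ) {k : ℕ} (hk : k ≤ n) {c : ℝ}
    (H : ∀ S : Finset (Fin n), S.card = k → ∑ i ∈ S, x i ≤ c) : topKSum x k ≤ c := by
  refine csSup_le (topK_nonempty x hk) ?_
  rintro _ ⟨S, hS, rfl⟩
  exact H S hS

lemma topKSum_comp_perm (x : Fin n → ℝ) (σ : Equiv.Perm (Fin n)) (k : ℕ) :
    topKSum (x ∘ σ) k = topKSum x k := by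
  unfold topKSum
  congr 1
  ext r
  constructor
  · rintro ⟨S, hS, rfl⟩
    refine ⟨S.map σ.toEmbedding, by simpa using hS, ?_⟩
    simp only [Finset.sum_map]
    rfl
  · rintro ⟨S, hS, rfl⟩
    refine ⟨S.map σ.symm.toEmbedding, by simpa using hS, ?_⟩
    simp only [Finset.sum_map]
    simp [Function.comp]

lemma le_apply_of_strictMono {k : ℕ} {e : Fin k → Fin n} (he : StrictMono e)
    (j : Fin k) : (j : ℕ) ≤ (e j : ℕ) := by
  obtain ⟨m, hm⟩ := j
  induction m with
  | zero => exact Nat.zero_le _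
  | succ m ih =>
      have hm' : m < k := Nat.lt_of_succ_lt hm
      have h1 : e ⟨m, hm'⟩ < e ⟨m + 1, hm⟩ := he (by simp [Fin.lt_def])
      have h2 : m ≤ (e ⟨m, hm'⟩ : ℕ) := ih hm'
      have : (e ⟨m, hm'⟩ : ℕ) < (e ⟨m + 1, hm⟩ : ℕ) := h1
      have h3 : ((⟨m + 1, hm⟩ : Fin k) : ℕ) = m + 1 := rfl
      omega


lemma topKSum_antitone (w : Fin n → ℝ) (hw : Antitone w) {k : ℕ} (hk : k ≤ n) :
    topKSum w k = ∑ j : Fin k, w (Fin.castLE hk j) := by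
  apply le_antisymm
  · refine topKSum_le w hk ?_
    intro S hS
    have e := S.orderEmbOfFin hS
    set e := S.orderEmbOfFin hS with he
    have hSmap : S = (univ : Finset (Fin k)).map e.toEmbedding := by
      refine (Finset.eq_of_subset_of_card_le ?_ ?_).symm
      · intro i hi
        obtain ⟨j, -, rfl⟩ := Finset.mem_map.1 hi
        exact S.orderEmbOfFin_mem hS j
      · simp [hS]
    rw [hSmap, Finset.sum_map]
    refine Finset.sum_le_sum ?_
    intro j _
    refine hw ?_
    have := le_apply_of_strictMono e.strictMono j
    rw [Fin.le_def]
    simpa using this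
  · have hS : ((univ : Finset (Fin k)).map (Fin.castLEEmb hk)).card = k := by
      simp
    have := sum_le_topKSum w hS
    rwa [Finset.sum_map] at this


lemma abel_nonneg (c d : ℕ → ℝ) :
    ∀ m : ℕ, (∀ i j, i ≤ j → j < m → c j ≤ c i) → (∀ i, i < m → 0 ≤ c i) →
      (∀ k, k ≤ m → 0 ≤ ∑ i ∈ Finset.range k, d i) →
      0 ≤ ∑ i ∈ Finset.range m, c i * d i := by
  intro m
  induction m generalizing c with
  | zero => simp
  | succ m ih =>
      intro hanti hpos hpre
      have key : ∑ i ∈ Finset.range (m + 1), c i * d i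
          = (∑ i ∈ Finset.range m, (c i - c m) * d i)
            + c m * ∑ i ∈ Finset.range (m + 1), d i := by
        rw [Finset.mul_sum]
        rw [Finset.sum_congr rfl (fun i _ => by ring :
          ∀ i ∈ Finset.range (m + 1), c i * d i = (c i - c m) * d i + c m * d i)]
        rw [Finset.sum_add_distrib]
        congr 1
        rw [Finset.sum_range_succ]
        simp
      rw [key]
      have h1 : 0 ≤ ∑ i ∈ Finset.range m, (c i - c m) * d i := by
        refine ih (fun i => c i - c m) ?_ ?_ ?_
        · intro i j hij hjm
          have := hanti i j hij (Nat.lt_succ_of_lt hjm)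
          linarith
        · intro i him
          have := hanti i m (Nat.le_of_lt him) (Nat.lt_succ_self m)
          linarith
        · intro k hkm
          exact hpre k (Nat.le_succ_of_le hkm)
      have h2 : 0 ≤ c m * ∑ i ∈ Finset.range (m + 1), d i :=
        mul_nonneg (hpos m (Nat.lt_succ_self m)) (hpre (m + 1) le_rfl)
      linarith

section Subgrad

variable {f : ℝ → ℝ} (hconv : ConvexOn ℝ Set.univ f)

/-- left-derivative-like subgradient of a convex function. -/
def sg (f : ℝ → ℝ) (y : ℝ) : ℝ :=
  sSup ((fun x => (f x - f y) / (x - y)) '' Set.Iio y)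

include hconv

lemma sg_bddAbove (y : ℝ) :
    BddAbove ((fun x => (f x - f y) / (x - y)) '' Set.Iio y) := by
  refine ⟨(f (y + 1) - f y) / (y + 1 - y), ?_⟩
  rintro _ ⟨x, hx, rfl⟩
  simp only [Set.mem_Iio] at hx
  exact hconv.secant_mono trivial trivial trivial (ne_of_lt hx) (by linarith) (by linarith)

omit hconv in
lemma sg_nonempty (y : ℝ) :
    ((fun x => (f x - f y) / (x - y)) '' Set.Iio y).Nonempty :=
  ⟨_, ⟨y - 1, by simp, rfl⟩⟩

lemma sg_nonneg (hmono : Monotone f) (y : ℝ) : 0 ≤ sg f y := by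
  have h1 : (f (y - 1) - f y) / (y - 1 - y) ≤ sg f y :=
    le_csSup (sg_bddAbove hconv y) ⟨y - 1, by simp, rfl⟩
  have h2 : (f (y - 1) - f y) / (y - 1 - y) = f y - f (y - 1) := by
    have : y - 1 - y = -1 := by ring
    rw [this]
    field_simp
    ring
  have h3 : f (y - 1) ≤ f y := hmono (by linarith)
  linarith

lemma sg_subgrad (x y : ℝ) : sg f y * (x - y) ≤ f x - f y := by
  rcases lt_trichotomy x y with hxy | rfl | hxy
  · have hm : (f x - f y) / (x - y) ≤ sg f y :=
      le_csSup (sg_bddAbove hconv y) ⟨x, hxy, rfl⟩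
    have h0 : x - y ≠ 0 := by linarith
    calc sg f y * (x - y) ≤ (f x - f y) / (x - y) * (x - y) :=
          mul_le_mul_of_nonpos_right hm (by linarith)
      _ = f x - f y := div_mul_cancel₀ _ h0
  · simp
  · have hm : sg f y ≤ (f x - f y) / (x - y) := by
      refine csSup_le (sg_nonempty y) ?_
      rintro _ ⟨z, hz, rfl⟩
      simp only [Set.mem_Iio] at hz
      exact hconv.secant_mono trivial trivial trivial (ne_of_lt hz) (by linarith)
        (by linarith)
    have h0 : x - y ≠ 0 := by linarith
    calc sg f y * (x - y) ≤ (f x - f y) / (x - y) * (x - y) :=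
          mul_le_mul_of_nonneg_right hm (by linarith)
      _ = f x - f y := div_mul_cancel₀ _ h0

lemma sg_mono : Monotone (sg f) := by
  intro y1 y2 h12
  rcases eq_or_lt_of_le h12 with rfl | hlt
  · exact le_rfl
  refine csSup_le (sg_nonempty y1) ?_
  rintro _ ⟨x, hx, rfl⟩
  simp only [Set.mem_Iio] at hx
  have step1 : (f x - f y1) / (x - y1) = (f y1 - f x) / (y1 - x) := by
    rw [← neg_div_neg_eq]
    ring_nf
  have step2 : (f y1 - f x) / (y1 - x) ≤ (f y2 - f y1) / (y2 - y1) :=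
    hconv.slope_mono_adjacent trivial trivial hx hlt
  have step3 : (f y2 - f y1) / (y2 - y1) = (f y1 - f y2) / (y1 - y2) := by
    rw [← neg_div_neg_eq]
    ring_nf
  have step4 : (f y1 - f y2) / (y1 - y2) ≤ sg f y2 :=
    le_csSup (sg_bddAbove hconv y2) ⟨y1, hlt, rfl⟩
  linarith

end Subgrad

end WMaux


theorem wm_fwd {n : ℕ} (a b : Fin n → ℝ)
    (H : ∀ h : ℝ → ℝ, Monotone h → ConvexOn ℝ Set.univ h →
      ∑ i, h (b i) ≤ ∑ i, h (a i)) : WeakMajorizes a b := by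
  intro k hk1 hkn
  obtain ⟨S, hS, htop⟩ := WMaux.exists_topKSum a hkn
  have hSne : S.Nonempty := Finset.card_pos.1 (by omega)
  set t := S.inf' hSne a with ht
  have htle : ∀ i ∈ S, t ≤ a i := fun i hi => Finset.inf'_le a hi
  have hout : ∀ i ∉ S, a i ≤ t := by
    by_contra hcon
    push_neg at hcon
    obtain ⟨i₀, hi₀, hlt⟩ := hcon
    obtain ⟨j₀, hj₀S, hj₀⟩ := S.exists_mem_eq_inf' hSne a
    have hi₀e : i₀ ∉ S.erase j₀ := fun h => hi₀ (Finset.mem_of_mem_erase h)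
    have hcard : (insert i₀ (S.erase j₀)).card = k := by
      rw [Finset.card_insert_of_notMem hi₀e, Finset.card_erase_of_mem hj₀S]
      omega
    have hle := WMaux.sum_le_topKSum a hcard
    rw [Finset.sum_insert hi₀e, Finset.sum_erase_eq_sub hj₀S, htop] at hle
    have : a j₀ = t := by rw [ht, hj₀]
    linarith
  set hfun : ℝ → ℝ := fun x => max (x - t) 0 with hfdef
  have hmono : Monotone hfun := fun x y hxy => max_le_max (by simp; linarith) le_rfl
  have hconvf : ConvexOn ℝ Set.univ hfun := by
    have c1 : ConvexOn ℝ Set.univ (fun x : ℝ => x - t) :=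
      (convexOn_id convex_univ).sub (concaveOn_const t convex_univ)
    exact c1.sup (convexOn_const 0 convex_univ)
  have hid : ∑ i, hfun (a i) = topKSum a k - k * t := by
    have hsplit : ∑ i ∈ S, hfun (a i) + ∑ i ∈ Sᶜ, hfun (a i) = ∑ i, hfun (a i) :=
      Finset.sum_add_sum_compl S _
    have h1 : ∑ i ∈ Sᶜ, hfun (a i) = 0 := by
      refine Finset.sum_eq_zero ?_
      intro i hi
      have := hout i (Finset.mem_compl.1 hi)
      simp only [hfdef]
      exact max_eq_right (by linarith)
    have h2 : ∑ i ∈ S, hfun (a i) = ∑ i ∈ S, (a i - t) := by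
      refine Finset.sum_congr rfl ?_
      intro i hi
      exact max_eq_left (by have := htle i hi; linarith)
    have h3 : ∑ i ∈ S, (a i - t) = (∑ i ∈ S, a i) - k * t := by
      rw [Finset.sum_sub_distrib, Finset.sum_const, hS, nsmul_eq_mul]
    rw [← hsplit, h1, h2, h3, htop]
    ring
  have hbd : topKSum b k ≤ k * t + ∑ i, hfun (b i) := by
    refine WMaux.topKSum_le b hkn ?_
    intro T hT
    have step1 : ∑ i ∈ T, b i ≤ ∑ i ∈ T, (t + hfun (b i)) := by
      refine Finset.sum_le_sum ?_
      intro i _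
      have : b i - t ≤ hfun (b i) := le_max_left _ _
      linarith
    have step2 : ∑ i ∈ T, (t + hfun (b i)) = k * t + ∑ i ∈ T, hfun (b i) := by
      rw [Finset.sum_add_distrib, Finset.sum_const, hT, nsmul_eq_mul]
    have step3 : ∑ i ∈ T, hfun (b i) ≤ ∑ i, hfun (b i) := by
      refine Finset.sum_le_sum_of_subset_of_nonneg (Finset.subset_univ T) ?_
      intro i _ _
      exact le_max_right _ _
    linarith
  have := H hfun hmono hconvf
  linarith

theorem wm_bwd {n : ℕ} (a b : Fin n → ℝ) (hw : WeakMajorizes a b)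
    (f : ℝ → ℝ) (hm : Monotone f) (hc : ConvexOn ℝ Set.univ f) :
    ∑ i, f (b i) ≤ ∑ i, f (a i) := by
  classical
  set σ := Tuple.sort (fun i => -(a i)) with hσ
  set τ := Tuple.sort (fun i => -(b i)) with hτ
  set u : Fin n → ℝ := a ∘ σ with hudef
  set v : Fin n → ℝ := b ∘ τ with hvdef
  have hu : Antitone u := by
    intro i j hij
    have := Tuple.monotone_sort (fun i => -(a i)) hij
    simp only [Function.comp] at this
    simp only [hudef, Function.comp]
    linarith
  have hv : Antitone v := by
    intro i j hij
    have := Tuple.monotone_sort (fun i => -(b i)) hij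
    simp only [Function.comp] at this
    simp only [hvdef, Function.comp]
    linarith
  set u' : ℕ → ℝ := fun i => if h : i < n then u ⟨i, h⟩ else 0 with hu'
  set v' : ℕ → ℝ := fun i => if h : i < n then v ⟨i, h⟩ else 0 with hv'
  have hupre : ∀ k : ℕ, k ≤ n → ∑ i ∈ Finset.range k, u' i = topKSum a k := by
    intro k hk
    calc ∑ i ∈ Finset.range k, u' i = ∑ j : Fin k, u' j :=
          (Fin.sum_univ_eq_sum_range _ k).symm
      _ = ∑ j : Fin k, u (Fin.castLE hk j) := by
          refine Finset.sum_congr rfl ?_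
          intro j _
          have hjn : (j : ℕ) < n := lt_of_lt_of_le j.2 hk
          simp only [hu', dif_pos hjn]
          rfl
      _ = topKSum u k := (WMaux.topKSum_antitone u hu hk).symm
      _ = topKSum a k := WMaux.topKSum_comp_perm a σ k
  have hvpre : ∀ k : ℕ, k ≤ n → ∑ i ∈ Finset.range k, v' i = topKSum b k := by
    intro k hk
    calc ∑ i ∈ Finset.range k, v' i = ∑ j : Fin k, v' j :=
          (Fin.sum_univ_eq_sum_range _ k).symm
      _ = ∑ j : Fin k, v (Fin.castLE hk j) := by
          refine Finset.sum_congr rfl ?_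
          intro j _
          have hjn : (j : ℕ) < n := lt_of_lt_of_le j.2 hk
          simp only [hv', dif_pos hjn]
          rfl
      _ = topKSum v k := (WMaux.topKSum_antitone v hv hk).symm
      _ = topKSum b k := WMaux.topKSum_comp_perm b τ k
  have habel : 0 ≤ ∑ i ∈ Finset.range n, WMaux.sg f (v' i) * (u' i - v' i) := by
    refine WMaux.abel_nonneg _ _ n ?_ ?_ ?_
    · intro i j hij hjn
      refine WMaux.sg_mono hc ?_
      have hin : i < n := lt_of_le_of_lt hij hjn
      simp only [hv', dif_pos hin, dif_pos hjn]
      exact hv (by exact_mod_cast hij)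
    · intro i _
      exact WMaux.sg_nonneg hc hm _
    · intro k hk
      rcases Nat.eq_zero_or_pos k with rfl | hk1
      · simp
      · have : ∑ i ∈ Finset.range k, (u' i - v' i)
            = topKSum a k - topKSum b k := by
          rw [Finset.sum_sub_distrib, hupre k hk, hvpre k hk]
        rw [this]
        have := hw k hk1 hk
        linarith
  have hstep : ∑ i ∈ Finset.range n, WMaux.sg f (v' i) * (u' i - v' i)
      ≤ ∑ i ∈ Finset.range n, (f (u' i) - f (v' i)) := by
    refine Finset.sum_le_sum ?_
    intro i _
    exact WMaux.sg_subgrad hc (u' i) (v' i)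
  have hsum_u : ∑ i ∈ Finset.range n, f (u' i) = ∑ i, f (a i) := by
    calc ∑ i ∈ Finset.range n, f (u' i) = ∑ j : Fin n, f (u' j) :=
          (Fin.sum_univ_eq_sum_range _ n).symm
      _ = ∑ j : Fin n, f (u j) := by
          refine Finset.sum_congr rfl ?_
          intro j _
          simp only [hu', dif_pos j.2, Fin.eta]
      _ = ∑ j : Fin n, f (a (σ j)) := rfl
      _ = ∑ i, f (a i) := Equiv.sum_comp σ (fun i => f (a i))
  have hsum_v : ∑ i ∈ Finset.range n, f (v' i) = ∑ i, f (b i) := by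
    calc ∑ i ∈ Finset.range n, f (v' i) = ∑ j : Fin n, f (v' j) :=
          (Fin.sum_univ_eq_sum_range _ n).symm
      _ = ∑ j : Fin n, f (v j) := by
          refine Finset.sum_congr rfl ?_
          intro j _
          simp only [hv', dif_pos j.2, Fin.eta]
      _ = ∑ j : Fin n, f (b (τ j)) := rfl
      _ = ∑ i, f (b i) := Equiv.sum_comp τ (fun i => f (b i))
  have hfinal : ∑ i ∈ Finset.range n, (f (u' i) - f (v' i))
      = ∑ i, f (a i) - ∑ i, f (b i) := by
    rw [Finset.sum_sub_distrib, hsum_u, hsum_v]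
  linarith [habel, hstep, hfinal.ge, hfinal.le]

/-- `∑ h(a_i) ≥ ∑ h(b_i)` for all nondecreasing convex `h` iff `a` weakly
majorizes `b`. -/
theorem sum_nondecreasing_convex_ge_iff_weakMajorizes
    {n : ℕ} (a b : Fin n → ℝ) :
    (∀ h : ℝ → ℝ, Monotone h → ConvexOn ℝ Set.univ h →
      ∑ i, h (b i) ≤ ∑ i, h (a i)) ↔ WeakMajorizes a b := by
  constructor
  · exact fun H => wm_fwd a b H
  · exact fun hw f hm hc => wm_bwd a b hw f hm hc
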